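/- (Proposition 1, monotonicity of Algorithm 1.) Let (W, x, y) ∈ C(y₀) for some parameter vector y₀ ∈ ℝ^K. Then (W, x, y) ∈ C(y), i.e., the point remains feasible for the linearized problem whose linearization point is its own slack vector y. Consequently, if the set of objective values V(y) := {Σ_{k=1}^K x'_k : (W', x', y') ∈ C(y)} is bounded above, then Σ_{k=1}^K x_k ≤ sup V(y); in particular, the sequence of optimal objective values generated by iteratively replacing the linearization point y₀ with the optimal slack y is non-decreasing. -/

import Mathlib

open scoped ComplexOrder

/-- The linearized feasible set `C(y₀)` of problem `P2(y₀)`: `(W, x, y)` is feasible iff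
the `W k` are Hermitian PSD, `log(σ² + Σ_i Re Tr(H_k W_i)) ≥ x_k + y_k`, `x_k ≥ c_k`,
`Σ_k Re Tr(W_k) ≤ P`, and
`σ² + Σ_{i≠k} Re Tr(H_k W_i) ≤ exp(y₀_k)·(y_k − y₀_k + 1)` for all `k`. -/
def LinFeasible {K M : ℕ} (H : Fin K → Matrix (Fin M) (Fin M) ℂ) (σ2 P : ℝ)
    (c : Fin K → ℝ) (y₀ : Fin K → ℝ)
    (W : Fin K → Matrix (Fin M) (Fin M) ℂ) (x y : Fin K → ℝ) : Prop :=
  (∀ k, (W k).PosSemidef) ∧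
  (∀ k, x k + y k ≤ Real.log (σ2 + ∑ i, ((H k * W i).trace).re)) ∧
  (∀ k, c k ≤ x k) ∧
  (∑ k, ((W k).trace).re ≤ P) ∧
  (∀ k, σ2 + ∑ i ∈ Finset.univ.erase k, ((H k * W i).trace).re
      ≤ Real.exp (y₀ k) * (y k - y₀ k + 1))

/-- Proposition 1 (monotonicity of Algorithm 1): any point `(W, x, y)` feasible for the
linearized problem `P2(y₀)` remains feasible for `P2(y)`, the linearized problem whose
linearization point is its own slack vector `y`.  Consequently, if the set of objective
values of `P2(y)` is bounded above, then `Σ_k x_k` is at most its supremum; hence the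
sequence of optimal objective values generated by iteratively replacing the linearization
point with the optimal slack is non-decreasing. -/
theorem linearized_feasible_self_and_monotone
    {K M : ℕ} (hK : 1 ≤ K) (hM : 1 ≤ M)
    (H : Fin K → Matrix (Fin M) (Fin M) ℂ) (hH : ∀ k, (H k).PosSemidef)
    (σ2 P : ℝ) (hσ2 : 0 < σ2) (hP : 0 < P) (c : Fin K → ℝ) (y₀ : Fin K → ℝ)
    (W : Fin K → Matrix (Fin M) (Fin M) ℂ) (x y : Fin K → ℝ)
    (hfeas : LinFeasible H σ2 P c y₀ W x y) :
    LinFeasible H σ2 P c y W x y ∧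
      (BddAbove {s : ℝ | ∃ W' x' y', LinFeasible H σ2 P c y W' x' y' ∧ s = ∑ k, x' k} →
        ∑ k, x k ≤
          sSup {s : ℝ | ∃ W' x' y', LinFeasible H σ2 P c y W' x' y' ∧ s = ∑ k, x' k}) := by
  obtain ⟨h1, h2, h3, h4, h5⟩ := hfeas
  have hself : LinFeasible H σ2 P c y W x y := by
    refine ⟨h1, h2, h3, h4, fun k => ?_⟩
    calc σ2 + ∑ i ∈ Finset.univ.erase k, ((H k * W i).trace).re
        ≤ Real.exp (y₀ k) * (y k - y₀ k + 1) := h5 k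
      _ ≤ Real.exp (y₀ k) * Real.exp (y k - y₀ k) := by
          have := Real.add_one_le_exp (y k - y₀ k)
          nlinarith [Real.exp_pos (y₀ k)]
      _ = Real.exp (y k) * (y k - y k + 1) := by
          rw [← Real.exp_add]; ring_nf
  refine ⟨hself, fun hbdd => le_csSup hbdd ⟨W, x, y, hself, rfl⟩⟩
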